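/- arXiv:2508.06907 — 2 statements merged into one kernel-verified Lean document; each statement's English description precedes it below -/
import Mathlib

section
/- Let m ≥ 1, let U = u₁…uₘ and W = w₁…wₘ be permutations of length m and V = v₁…v_{2m-1} a permutation of length 2m-1, such that every symbol of U is greater than every symbol of V, every symbol of V is greater than every symbol of W, and V is square-free. Define P = p₁…p_{4m-1} by pᵢ = u_{(i+3)/4} if i ≡ 1 mod 4, pᵢ = w_{(i+1)/4} if i ≡ 3 mod 4, and pᵢ = v_{i/2} if i is even. Then P is square-free. -/
/-- Two sequences of distinct integers are order-isomorphic: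
same length and corresponding pairs compare the same way. -/
def OrdIso (p q : List ℤ) : Prop :=
  p.length = q.length ∧
  ∀ i j : ℕ, i < p.length → j < p.length →
    (p.getD i 0 < p.getD j 0 ↔ q.getD i 0 < q.getD j 0)

/-- A square is a sequence X₁X₂ with X₁ order-isomorphic to X₂ and |X₁| ≥ 2. -/
def IsSquareL (x : List ℤ) : Prop :=
  ∃ a b : List ℤ, x = a ++ b ∧ 2 ≤ a.length ∧ OrdIso a b

/-- A sequence contains a square if some contiguous factor is a square. -/
def ContainsSquare (p : List ℤ) : Prop :=
  ∃ f : List ℤ, f <:+: p ∧ IsSquareL f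

/-- Square-free: no contiguous factor is a square. -/
def SquareFreeL (p : List ℤ) : Prop := ¬ ContainsSquare p

/-- `Q` is an extension of `P` in position `i`:
`Q` has length `|P|+1` and deleting its (i+1)-th symbol gives a
sequence order-isomorphic to `P`. -/
def ExtL (Q P : List ℤ) (i : ℕ) : Prop :=
  Q.Nodup ∧ Q.length = P.length + 1 ∧ i ≤ P.length ∧ OrdIso (Q.eraseIdx i) P

/-- The interleaving pattern a₁b₁c₁b₂a₂b₃c₂… of length 4m-1 :
with 1-based index i, pᵢ = a_{(i+3)/4} if i ≡ 1 mod 4, pᵢ = c_{(i+1)/4}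
if i ≡ 3 mod 4, pᵢ = b_{i/2} if i is even. -/
def interleave (A B C : List ℤ) (m : ℕ) : List ℤ :=
  (List.range (4*m - 1)).map (fun k =>
    if (k+1) % 4 = 1 then A.getD ((k+4)/4 - 1) 0
    else if (k+1) % 4 = 3 then C.getD ((k+2)/4 - 1) 0
    else B.getD ((k+1)/2 - 1) 0)

lemma interleave_length (A B C : List ℤ) (m : ℕ) :
    (interleave A B C m).length = 4*m-1 := by simp [interleave]

lemma interleave_getD (A B C : List ℤ) (m k : ℕ) (h : k < 4*m-1) :
    (interleave A B C m).getD k 0 =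
      if k % 4 = 0 then A.getD (k/4) 0
      else if k % 4 = 2 then C.getD (k/4) 0
      else B.getD (k/2) 0 := by
  unfold interleave
  rw [List.getD_eq_getElem _ _ (by simpa using h)]
  simp only [List.getElem_map, List.getElem_range]
  rcases (show k%4 = 0 ∨ k%4=1 ∨ k%4=2 ∨ k%4=3 by omega) with h4|h4|h4|h4
  · rw [if_pos (by omega), if_pos (by omega)]
    congr 1; omega
  · rw [if_neg (by omega), if_neg (by omega), if_neg (by omega), if_neg (by omega)]
    congr 1; omega
  · rw [if_neg (by omega), if_pos (by omega), if_neg (by omega), if_pos (by omega)]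
    congr 1; omega
  · rw [if_neg (by omega), if_neg (by omega), if_neg (by omega), if_neg (by omega)]
    congr 1; omega

lemma getD_mid (p q r : List ℤ) (k : ℕ) (hk : k < q.length) :
    (p ++ q ++ r).getD (p.length + k) 0 = q.getD k 0 := by
  rw [List.append_assoc, List.getD_append_right p _ 0 _ (by omega), Nat.add_sub_cancel_left,
    List.getD_append _ _ _ _ hk]

lemma getD_mem (l : List ℤ) (k : ℕ) (h : k < l.length) : l.getD k 0 ∈ l := by
  rw [List.getD_eq_getElem _ _ h]; exact List.getElem_mem h

lemma getD_take_drop (l : List ℤ) (c t k : ℕ) (h : c + t ≤ l.length) (hk : k < t) :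
    ((l.drop c).take t).getD k 0 = l.getD (c+k) 0 := by
  rw [List.getD_eq_getElem _ _ (by simp; omega), List.getD_eq_getElem _ _ (by omega)]
  simp [List.getElem_take, List.getElem_drop]

theorem stmt4 (m : ℕ) (hm : 1 ≤ m) (U V W : List ℤ)
    (hU : U.length = m) (hV : V.length = 2*m - 1) (hW : W.length = m)
    (hUn : U.Nodup) (hVn : V.Nodup) (hWn : W.Nodup)
    (hUV : ∀ u ∈ U, ∀ v ∈ V, v < u) (hVW : ∀ v ∈ V, ∀ w ∈ W, w < v)
    (hVsf : SquareFreeL V) :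
    SquareFreeL (interleave U V W m) := by
  rintro ⟨f, ⟨pre, suf, hP⟩, a, b, hf, h2, hlen, hiso⟩
  set P := interleave U V W m with hPdef
  set g : ℕ → ℤ := fun k => P.getD k 0 with hg
  set s := pre.length with hs
  set l := a.length with hl
  have hbl : b.length = l := hlen.symm
  have hLP : P.length = 4*m-1 := interleave_length U V W m
  have hsL : s + 2*l + suf.length = 4*m-1 := by
    have := congrArg List.length hP
    simp [hf, hbl] at this
    rw [hLP] at this; omega
  -- values of g on the two halves of the square
  have hga : ∀ i < l, g (s+i) = a.getD i 0 := by
    intro i hi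
    have : P = pre ++ (a ++ b) ++ suf := by rw [← hP, hf]
    rw [hg]; simp only [this]
    rw [getD_mid _ _ _ i (by simp; omega), List.getD_append _ _ _ _ (by omega)]
  have hgb : ∀ i < l, g (s+l+i) = b.getD i 0 := by
    intro i hi
    have : P = pre ++ (a ++ b) ++ suf := by rw [← hP, hf]
    rw [hg]; simp only [this]
    rw [show s + l + i = s + (l + i) by omega, getD_mid _ _ _ (l+i) (by simp; omega),
      List.getD_append_right _ _ _ _ (by omega)]
    congr 1; omega
  have Hg : ∀ i j, i < l → j < l → (g (s+i) < g (s+j) ↔ g (s+l+i) < g (s+l+j)) := by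
    intro i j hi hj
    rw [hga i hi, hga j hj, hgb i hi, hgb j hj]
    exact hiso i j hi hj
  -- memberships
  have hmemU : ∀ k, k < 4*m-1 → k % 4 = 0 → g k ∈ U := by
    intro k hk h4
    rw [hg]; simp only [hPdef]
    rw [interleave_getD U V W m k hk, if_pos h4]
    exact getD_mem _ _ (by omega)
  have hmemW : ∀ k, k < 4*m-1 → k % 4 = 2 → g k ∈ W := by
    intro k hk h4
    rw [hg]; simp only [hPdef]
    rw [interleave_getD U V W m k hk, if_neg (by omega), if_pos h4]
    exact getD_mem _ _ (by omega)
  have hgV : ∀ k, k < 4*m-1 → k % 2 = 1 → g k = V.getD (k/2) 0 := by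
    intro k hk h2'
    rw [hg]; simp only [hPdef]
    rw [interleave_getD U V W m k hk, if_neg (by omega), if_neg (by omega)]
  have hmemV : ∀ k, k < 4*m-1 → k % 2 = 1 → g k ∈ V := by
    intro k hk h2'
    rw [hgV k hk h2']
    exact getD_mem _ _ (by omega)
  -- sign of adjacent comparisons
  have pairSign : ∀ k, k+1 < 4*m-1 → (g k < g (k+1) ↔ (k + 2 - k % 2) % 4 = 0) := by
    intro k hk
    rcases (show k % 2 = 0 ∨ k % 2 = 1 by omega) with h2'|h2'
    · have hv : g (k+1) ∈ V := hmemV (k+1) hk (by omega)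
      rcases (show k % 4 = 0 ∨ k % 4 = 2 by omega) with h4|h4
      · have := hUV _ (hmemU k (by omega) h4) _ hv
        exact iff_of_false (by linarith) (by omega)
      · have := hVW _ hv _ (hmemW k (by omega) h4)
        exact iff_of_true (by linarith) (by omega)
    · have hv : g k ∈ V := hmemV k (by omega) h2'
      rcases (show (k+1) % 4 = 0 ∨ (k+1) % 4 = 2 by omega) with h4|h4
      · have := hUV _ (hmemU (k+1) hk h4) _ hv
        exact iff_of_true (by linarith) (by omega)
      · have := hVW _ hv _ (hmemW (k+1) hk h4)
        exact iff_of_false (by linarith) (by omega)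
  have hPair : ∀ i, i+1 < l →
      ((s+i+2 - (s+i) % 2) % 4 = 0 ↔ (s+l+i+2 - (s+l+i) % 2) % 4 = 0) := by
    intro i hi
    rw [← pairSign (s+i) (by omega), ← pairSign (s+l+i) (by omega)]
    exact Hg i (i+1) (by omega) hi
  rcases (show l % 2 = 1 ∨ l % 4 = 2 ∨ l % 4 = 0 by omega) with hl4|hl4|hl4
  · have h0 := hPair 0 (by omega)
    have h1 := hPair 1 (by omega)
    omega
  · have h0 := hPair 0 (by omega)
    omega
  · -- l = 2t, extract a square in V
    set t := l/2 with ht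
    set c := s/2 with hc
    have hct : c + 2*t ≤ 2*m-1 := by omega
    have hVg : ∀ x, x < 2*m-1 → V.getD x 0 = g (2*x+1) := by
      intro x hx
      rw [hgV (2*x+1) (by omega) (by omega)]
      congr 1; omega
    have key : ∀ r1 r2, r1 < t → r2 < t →
        (V.getD (c+r1) 0 < V.getD (c+r2) 0 ↔ V.getD (c+t+r1) 0 < V.getD (c+t+r2) 0) := by
      intro r1 r2 hr1 hr2
      have d := 2*c+1-s
      have e1 : ∀ r, r < t → 2*(c+r)+1 = s + (2*r + (2*c+1-s)) := by intro r _; omega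
      have e2 : ∀ r, r < t → 2*(c+t+r)+1 = s + l + (2*r + (2*c+1-s)) := by intro r _; omega
      rw [hVg (c+r1) (by omega), hVg (c+r2) (by omega), hVg (c+t+r1) (by omega),
        hVg (c+t+r2) (by omega), e1 r1 hr1, e1 r2 hr2, e2 r1 hr1, e2 r2 hr2]
      exact Hg _ _ (by omega) (by omega)
    apply hVsf
    refine ⟨(V.drop c).take (2*t), ⟨V.take c, V.drop (c+2*t), ?_⟩,
      ((V.drop c).take (2*t)).take t, ((V.drop c).take (2*t)).drop t, ?_, ?_, ?_, ?_⟩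
    · have hdd : V.drop (c+2*t) = (V.drop c).drop (2*t) := by
        rw [List.drop_drop]
      rw [hdd, List.append_assoc, List.take_append_drop, List.take_append_drop]
    · rw [List.take_append_drop]
    · simp; omega
    · simp; omega
    · intro r1 r2 hr1 hr2
      have hlt : ((V.drop c).take (2*t)).length = 2*t := by simp; omega
      have ht' : (((V.drop c).take (2*t)).take t).length = t := by simp [hlt]; omega
      rw [ht'] at hr1 hr2
      have ga : ∀ r, r < t → (((V.drop c).take (2*t)).take t).getD r 0 = V.getD (c+r) 0 := by
        intro r hr
        rw [List.take_take, show min t (2*t) = t by omega, getD_take_drop V c t r (by omega) hr]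
      have gb : ∀ r, r < t → (((V.drop c).take (2*t)).drop t).getD r 0 = V.getD (c+t+r) 0 := by
        intro r hr
        rw [List.getD_eq_getElem _ _ (by simp [hlt]; omega)]
        rw [List.getElem_drop, ← List.getD_eq_getElem _ 0]
        rw [getD_take_drop V c (2*t) (t+r) (by omega) (by omega)]
        congr 1; omega
      rw [ga r1 hr1, ga r2 hr2, gb r1 hr1, gb r2 hr2]
      exact key r1 r2 hr1 hr2
end

section
/- There is no S-crucial square-free permutation of length 17 of the form P = 2,4,3,1,5,11,10,6,9,12,8,7,13,17,15,14,16; specifically, the extension of P obtained by inserting a new smallest symbol in position 15 is square-free. -/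
def P18 : List ℤ := [2, 4, 3, 1, 5, 11, 10, 6, 9, 12, 8, 7, 13, 17, 15, 14, 16]

/-- P18 with a new smallest symbol 0 inserted in position 15. -/
def Q18 : List ℤ := [2, 4, 3, 1, 5, 11, 10, 6, 9, 12, 8, 7, 13, 17, 15, 0, 14, 16]

instance decOrdIso (p q : List ℤ) : Decidable (OrdIso p q) :=
  decidable_of_iff (p.length = q.length ∧ ∀ i < p.length, ∀ j < p.length,
      (p.getD i 0 < p.getD j 0 ↔ q.getD i 0 < q.getD j 0))
    ⟨fun ⟨h1, h2⟩ => ⟨h1, fun i j hi hj => h2 i hi j hj⟩,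
     fun ⟨h1, h2⟩ => ⟨h1, fun i hi j hj => h2 i j hi hj⟩⟩

lemma containsSquare_iff (p : List ℤ) :
    ContainsSquare p ↔ ∃ s < p.length, ∃ k < p.length, 2 ≤ k ∧ s + 2 * k ≤ p.length ∧
      OrdIso ((p.drop s).take k) ((p.drop (s + k)).take k) := by
  constructor
  · rintro ⟨f, ⟨u, t, hp⟩, a, b, rfl, ha, iso⟩
    have hlen : a.length = b.length := iso.1
    have hl : p.length = u.length + (a.length + b.length) + t.length := by
      rw [← hp]; simp; omega
    have e0 : p.drop u.length = a ++ (b ++ t) := by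
      rw [← hp, List.append_assoc, List.drop_left, List.append_assoc]
    have e1 : (p.drop u.length).take a.length = a := by
      rw [e0, List.take_left]
    have e2 : (p.drop (u.length + a.length)).take a.length = b := by
      rw [← List.drop_drop, e0, List.drop_left, hlen, List.take_left]
    exact ⟨u.length, by omega, a.length, by omega, ha, by omega, by rw [e1, e2]; exact iso⟩
  · rintro ⟨s, hs, k, hk, h2, hsk, iso⟩
    refine ⟨(p.drop s).take k ++ (p.drop (s + k)).take k, ?_, _, _, rfl, ?_, iso⟩
    · have hdd : (p.drop s).drop k = p.drop (s + k) := by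
        rw [List.drop_drop]
      have : (p.drop s).take k ++ (p.drop (s + k)).take k = (p.drop s).take (k + k) := by
        rw [List.take_add, hdd]
      rw [this]
      exact ((p.drop s).take_prefix (k + k)).isInfix.trans (p.drop_suffix s).isInfix
    · rw [List.length_take, List.length_drop]
      omega

theorem stmt18 :
    (∀ x ∈ P18, (0 : ℤ) < x) ∧ ExtL Q18 P18 15 ∧ SquareFreeL Q18 ∧
    ¬ (SquareFreeL P18 ∧
        ∀ i ≤ 17, ∀ Q : List ℤ, ExtL Q P18 i → ContainsSquare Q) := by
  have hext : ExtL Q18 P18 15 := by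
    refine ⟨by decide, by decide, by decide, by decide⟩
  have hsf : SquareFreeL Q18 := by
    intro h
    rw [containsSquare_iff] at h
    revert h
    decide
  refine ⟨by decide, hext, hsf, ?_⟩
  rintro ⟨-, h⟩
  exact hsf (h 15 (by norm_num) Q18 hext)
end
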